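/- Assume π⁻ ≤ α_r·πʷ ≤ π⁺. Then the four thresholds satisfy the ordering Γ_IM ≤ Γ_NZ1 ≤ Γ_NZ2 ≤ Γ_EX. -/
import Mathlib


open Set

noncomputable section

/-- Net electricity exchange. -/
def netz (αr ηh wh wr g : ℝ) : ℝ := wr / αr - wh / ηh - g

/-- Electricity payment under net metering. -/
def epay (πp πm π0 αr ηh wh wr g : ℝ) : ℝ :=
  πp * max (netz αr ηh wh wr g) 0 + πm * min (netz αr ηh wh wr g) 0 + π0

/-- WDP profit. -/
def profit (πw πp πm π0 αr αh ηh : ℝ) (C : ℝ → ℝ) (wh wr g : ℝ) : ℝ :=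
  πw * (wh + wr) - epay πp πm π0 αr ηh wh wr g - C (wh / αh)

/-- clamp(x, a, b) = max(a, min(x, b)). -/
def clampR (x a b : ℝ) : ℝ := max a (min x b)

/-- Value function: sup of profit over the feasible rectangle. -/
def Pstar (πw πp πm π0 αr αh ηh : ℝ) (C : ℝ → ℝ) (wlh wuh wlr wur g : ℝ) : ℝ :=
  sSup ((fun p : ℝ × ℝ => profit πw πp πm π0 αr αh ηh C p.1 p.2 g) ''
    (Icc wlh wuh ×ˢ Icc wlr wur))

/-- ordering of the four thresholds. -/
theorem threshold_ordering
    (πp πm π0 πw αh ηh αr wlh wuh wlr wur : ℝ) (C : ℝ → ℝ)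
    (hπ : πm ≤ πp) (hπm : 0 ≤ πm) (hπw : 0 ≤ πw)
    (hαh : 0 < αh) (hηh : 0 < ηh) (hαr : 0 < αr)
    (hwlh : 0 ≤ wlh) (hwhb : wlh ≤ wuh) (hwlr : 0 ≤ wlr) (hwrb : wlr ≤ wur)
    (hC : StrictConvexOn ℝ univ C) (hCd : Differentiable ℝ C) (hCm : Monotone C)
    (Wfun : ℝ → ℝ)
    (hWfun : ∀ δ : ℝ, Wfun δ ∈ Icc wlh wuh ∧
      ∀ w ∈ Icc wlh wuh,
        (πw + δ / ηh) * w - C (w / αh) ≤ (πw + δ / ηh) * Wfun δ - C (Wfun δ / αh))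
    (hmid1 : πm ≤ αr * πw) (hmid2 : αr * πw ≤ πp) :
    wlr / αr - Wfun πp / ηh ≤ wlr / αr - Wfun (αr * πw) / ηh ∧
    wlr / αr - Wfun (αr * πw) / ηh ≤ wur / αr - Wfun (αr * πw) / ηh ∧
    wur / αr - Wfun (αr * πw) / ηh ≤ wur / αr - Wfun πm / ηh := by

  have mono : ∀ δ1 δ2 : ℝ, δ1 ≤ δ2 → Wfun δ1 ≤ Wfun δ2 := by
    intro δ1 δ2 h12
    rcases eq_or_lt_of_le h12 with rfl | hlt
    · exact le_rfl
    · by_contra hba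
      push_neg at hba
      have h1 := (hWfun δ1).2 (Wfun δ2) (hWfun δ2).1
      have h2 := (hWfun δ2).2 (Wfun δ1) (hWfun δ1).1
      have hd : 0 < (δ2 - δ1) / ηh := div_pos (by linarith) hηh
      have e1 : (πw + δ1 / ηh) = (πw + δ2 / ηh) - (δ2 - δ1) / ηh := by
        field_simp; ring
      nlinarith
  have h1 : Wfun (αr * πw) ≤ Wfun πp := mono _ _ hmid2
  have h3 : Wfun πm ≤ Wfun (αr * πw) := mono _ _ hmid1
  refine ⟨by gcongr, by gcongr, by gcongr⟩
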